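/- Let θ = (θ^{ij}) be a constant antisymmetric real n×n matrix. For a formal power series/polynomial f(x), define its flat lift f̂ = f(x^j + θ^{jk} ∂_k) as a formal differential operator (the unique operator in the kernel of all ad(x^i) + θ-deformations with zeroth-order term f). Then the composition of differential operators f̂ ∘ ĥ is again a flat lift, and its zeroth-order term equals the Moyal product f ⋆ h = Σ_{k≥0} (1/k!) Σ_{|I|=|J|=k} θ^{IJ} f_I h_J, where θ^{IJ} = θ^{i₁j₁}⋯θ^{i_k j_k}, f_I = ∂_I f, h_J = ∂_J h. -/

import Mathlib

open MvPolynomial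

noncomputable section

/-- Composition of the partial derivatives `∂_{I 0} ∘ ⋯ ∘ ∂_{I (k-1)}` as an
endomorphism of the polynomial ring. -/
def pderivComp {n k : ℕ} (I : Fin k → Fin n) :
    Module.End ℝ (MvPolynomial (Fin n) ℝ) :=
  (List.ofFn fun i => ((pderiv (I i)).toLinearMap :
     Module.End ℝ (MvPolynomial (Fin n) ℝ))).prod

/-- The deformed derivation `D^j = θ^{jk} ∂_k`. -/
def Dop {n : ℕ} (θ : Fin n → Fin n → ℝ) (j : Fin n) :
    Module.End ℝ (MvPolynomial (Fin n) ℝ) :=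
  ∑ m : Fin n, θ j m • ((pderiv m).toLinearMap :
     Module.End ℝ (MvPolynomial (Fin n) ℝ))

/-- `∏_i D^{I i}`. -/
def DComp {n k : ℕ} (θ : Fin n → Fin n → ℝ) (I : Fin k → Fin n) :
    Module.End ℝ (MvPolynomial (Fin n) ℝ) :=
  (List.ofFn fun i => Dop θ (I i)).prod

/-- The flat lift `f̂ = f(x + θ∂) = Σ_I (1/|I|!) (∂_I f)(x) · D^I`, the unique formal
differential operator commuting with the deformed constraints whose zeroth-order term
is `f`. -/
def flatLift {n : ℕ} (θ : Fin n → Fin n → ℝ) (f : MvPolynomial (Fin n) ℝ) :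
    Module.End ℝ (MvPolynomial (Fin n) ℝ) :=
  ∑ k ∈ Finset.range (f.totalDegree + 1),
    (k.factorial : ℝ)⁻¹ •
      ∑ I : Fin k → Fin n,
        (LinearMap.mulLeft ℝ (pderivComp I f)) * DComp θ I

/-- The `k`-th term of the Moyal product. -/
def moyalTerm {n : ℕ} (θ : Fin n → Fin n → ℝ) (k : ℕ)
    (f h : MvPolynomial (Fin n) ℝ) : MvPolynomial (Fin n) ℝ :=
  (k.factorial : ℝ)⁻¹ •
    ∑ I : Fin k → Fin n, ∑ J : Fin k → Fin n,
      (∏ i, θ (I i) (J i)) • ((pderivComp I f) * (pderivComp J h))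

/-- The Moyal product `f ⋆ h = Σ_k (1/k!) Σ_{|I|=|J|=k} θ^{IJ} f_I h_J`. -/
def moyal {n : ℕ} (θ : Fin n → Fin n → ℝ) (f h : MvPolynomial (Fin n) ℝ) :
    MvPolynomial (Fin n) ℝ :=
  ∑ k ∈ Finset.range (f.totalDegree + 1), moyalTerm θ k f h

end

/-! ### Auxiliary development -/

noncomputable section FlatLiftAux

open Finset

variable {n : ℕ}

local notation "P" => MvPolynomial (Fin n) ℝ
local notation "E" => Module.End ℝ (MvPolynomial (Fin n) ℝ)

/-- `∂_i` as a linear endomorphism. -/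
private def pd (i : Fin n) : Module.End ℝ (MvPolynomial (Fin n) ℝ) :=
  (pderiv i).toLinearMap

private lemma pderivComp_def {k : ℕ} (I : Fin k → Fin n) :
    pderivComp I = (List.ofFn fun i => pd (I i)).prod := rfl

private lemma pderivComp_nil (I : Fin 0 → Fin n) : pderivComp I = 1 := by
  simp [pderivComp, List.ofFn_zero]

private lemma pderivComp_cons {k : ℕ} (i0 : Fin n) (I : Fin k → Fin n) :
    pderivComp (Fin.cons i0 I) = pd i0 * pderivComp I := by
  simp [pderivComp, pd, List.ofFn_succ]

private lemma DComp_nil (θ : Fin n → Fin n → ℝ) (I : Fin 0 → Fin n) : DComp θ I = 1 := by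
  simp [DComp, List.ofFn_zero]

private lemma DComp_cons (θ : Fin n → Fin n → ℝ) {k : ℕ} (i0 : Fin n) (I : Fin k → Fin n) :
    DComp θ (Fin.cons i0 I) = Dop θ i0 * DComp θ I := by
  simp [DComp, List.ofFn_succ]

private lemma pderiv_comm (i j : Fin n) (f : MvPolynomial (Fin n) ℝ) :
    pderiv i (pderiv j f) = pderiv j (pderiv i f) := by
  induction f using MvPolynomial.induction_on with
  | C a => simp
  | add p q hp hq => simp [hp, hq]
  | mul_X p s hp =>
      by_cases hi : s = i <;> by_cases hj : s = j <;>
        simp [pderiv_mul, hp, hi, hj, Pi.single_apply] <;>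
          split_ifs <;> simp_all <;> ring

private lemma pd_comm (i j : Fin n) : Commute (pd i) (pd j) :=
  LinearMap.ext fun f => pderiv_comm i j f

private lemma Dop_comm_pd (θ : Fin n → Fin n → ℝ) (j m : Fin n) :
    Commute (Dop θ j) (pd m) :=
  Commute.sum_left _ _ _ fun i _ => ((pd_comm i m).smul_left (θ j i))

private lemma Dop_comm_Dop (θ : Fin n → Fin n → ℝ) (i j : Fin n) :
    Commute (Dop θ i) (Dop θ j) :=
  Commute.sum_right _ _ _ fun m _ => ((Dop_comm_pd θ i m).smul_right (θ j m))

private lemma commute_pderivComp {k : ℕ} (A : Module.End ℝ (MvPolynomial (Fin n) ℝ))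
    (hA : ∀ m, Commute A (pd m)) (I : Fin k → Fin n) : Commute A (pderivComp I) := by
  rw [pderivComp_def]
  exact Commute.list_prod_right _ _ (by
    intro x hx
    obtain ⟨i, rfl⟩ := List.mem_ofFn.mp hx
    exact hA _)

private lemma commute_DComp {k : ℕ} (θ : Fin n → Fin n → ℝ)
    (A : Module.End ℝ (MvPolynomial (Fin n) ℝ))
    (hA : ∀ m, Commute A (Dop θ m)) (I : Fin k → Fin n) : Commute A (DComp θ I) := by
  rw [DComp]
  exact Commute.list_prod_right _ _ (by
    intro x hx
    obtain ⟨i, rfl⟩ := List.mem_ofFn.mp hx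
    exact hA _)

private lemma Dop_comm_DComp (θ : Fin n → Fin n → ℝ) (j : Fin n) {k : ℕ}
    (I : Fin k → Fin n) : Commute (Dop θ j) (DComp θ I) :=
  commute_DComp θ _ (fun m => Dop_comm_Dop θ j m) I

private lemma Dop_comm_pderivComp (θ : Fin n → Fin n → ℝ) (j : Fin n) {k : ℕ}
    (I : Fin k → Fin n) : Commute (Dop θ j) (pderivComp I) :=
  commute_pderivComp _ (fun m => Dop_comm_pd θ j m) I

private lemma pd_comm_pderivComp (m : Fin n) {k : ℕ} (I : Fin k → Fin n) :
    Commute (pd m) (pderivComp I) :=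
  commute_pderivComp _ (fun m' => pd_comm m m') I

/-- generic extraction lemma for commuting families -/
private lemma prod_ofFn_extract {M : Type*} [Monoid M] (F : Fin n → M)
    (hF : ∀ i j, Commute (F i) (F j)) :
    ∀ {k : ℕ} (I : Fin (k + 1) → Fin n) (a : Fin (k + 1)),
      (List.ofFn fun i => F (I i)).prod
        = F (I a) * (List.ofFn fun i => F (I (a.succAbove i))).prod := by
  intro k
  induction k with
  | zero =>
      intro I a
      have : a = 0 := Fin.fin_one_eq_zero a
      subst this
      simp [List.ofFn_succ]
  | succ k ih =>
      intro I a
      induction a using Fin.cases with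
      | zero => simp [List.ofFn_succ]
      | succ b =>
          rw [List.ofFn_succ, List.prod_cons, ih (fun i => I i.succ) b,
            ← mul_assoc, (hF _ _).eq, mul_assoc]
          congr 2
          rw [List.ofFn_succ]
          simp [Fin.succ_succAbove_succ, Fin.succ_succAbove_zero]

private lemma pderivComp_extract {k : ℕ} (I : Fin (k + 1) → Fin n) (a : Fin (k + 1)) :
    pderivComp I = pd (I a) * pderivComp (fun c => I (a.succAbove c)) :=
  prod_ofFn_extract pd pd_comm I a

private lemma DComp_extract (θ : Fin n → Fin n → ℝ) {k : ℕ}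
    (I : Fin (k + 1) → Fin n) (a : Fin (k + 1)) :
    DComp θ I = Dop θ (I a) * DComp θ (fun c => I (a.succAbove c)) :=
  prod_ofFn_extract (Dop θ) (Dop_comm_Dop θ) I a

private lemma sum_insertNth {α : Type*} [AddCommMonoid α] {k : ℕ} (a : Fin (k + 1))
    (G : Fin n → (Fin k → Fin n) → α) :
    ∑ I : Fin (k + 1) → Fin n, G (I a) (fun c => I (a.succAbove c))
      = ∑ i0 : Fin n, ∑ I' : Fin k → Fin n, G i0 I' := by
  have : ∑ x : Fin n × (Fin k → Fin n), G x.1 x.2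
      = ∑ I : Fin (k + 1) → Fin n, G (I a) (fun c => I (a.succAbove c)) :=
    Fintype.sum_equiv (Fin.insertNthEquiv (fun _ => Fin n) a)
      (fun x => G x.1 x.2) (fun I => G (I a) (fun c => I (a.succAbove c)))
      (fun x => by simp)
  rw [← this, Fintype.sum_prod_type]

private lemma totalDegree_pderiv_le (i : Fin n) (f : MvPolynomial (Fin n) ℝ) (d : ℕ)
    (hf : f.totalDegree ≤ d + 1) : (pderiv i f).totalDegree ≤ d := by
  conv_lhs => rw [f.as_sum]
  rw [map_sum]
  refine (totalDegree_finset_sum _ _).trans (Finset.sup_le fun m hm => ?_)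
  rw [pderiv_monomial]
  by_cases hmi : m i = 0
  · simp [hmi]
  · refine (totalDegree_monomial_le _ _).trans ?_
    have hle : Finsupp.single i 1 ≤ m := by
      rw [Finsupp.single_le_iff]; omega
    have hsum : (m - Finsupp.single i 1).sum (fun _ e => e) + 1 = m.sum fun _ e => e := by
      have := tsub_add_cancel_of_le hle
      calc (m - Finsupp.single i 1).sum (fun _ e => e) + 1
          = (m - Finsupp.single i 1).sum (fun _ e => e)
            + (Finsupp.single i 1).sum (fun _ e => e) := by
              simp [Finsupp.sum_single_index]
        _ = ((m - Finsupp.single i 1) + Finsupp.single i 1).sum (fun _ e => e) := by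
              rw [Finsupp.sum_add_index (by simp) (by simp)]
        _ = m.sum fun _ e => e := by rw [this]
    have hms : m.sum (fun _ e => e) ≤ d + 1 := le_trans (le_totalDegree hm) hf
    simp only [Finsupp.sum, id_eq] at hsum hms ⊢
    omega

private lemma pderiv_eq_zero_of_totalDegree (i : Fin n) (f : MvPolynomial (Fin n) ℝ)
    (hf : f.totalDegree = 0) : pderiv i f = 0 := by
  have h := (totalDegree_eq_zero_iff (Fin n) f).mp hf
  conv_lhs => rw [f.as_sum]
  rw [map_sum]
  refine Finset.sum_eq_zero fun m hm => ?_
  rw [pderiv_monomial, h m hm i]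
  simp

private lemma totalDegree_pderivComp_le {k : ℕ} (I : Fin k → Fin n)
    (f : MvPolynomial (Fin n) ℝ) (d : ℕ) (hf : f.totalDegree ≤ d + k) :
    (pderivComp I f).totalDegree ≤ d := by
  induction k generalizing d with
  | zero => simpa [pderivComp_nil] using hf
  | succ k ih =>
      rw [pderivComp_extract I 0, Module.End.mul_apply]
      exact totalDegree_pderiv_le _ _ _ (ih _ _ (by omega))

private lemma pderivComp_eq_zero {k : ℕ} (I : Fin k → Fin n)
    (f : MvPolynomial (Fin n) ℝ) (hf : f.totalDegree < k) : pderivComp I f = 0 := by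
  cases k with
  | zero => omega
  | succ k =>
      rw [pderivComp_extract I 0, Module.End.mul_apply]
      refine pderiv_eq_zero_of_totalDegree _ _ ?_
      have := totalDegree_pderivComp_le (fun c => I ((0 : Fin (k+1)).succAbove c)) f 0
        (by omega)
      omega

/-- flat lift truncated at an arbitrary level `N`. -/
private def flatLiftAux (θ : Fin n → Fin n → ℝ) (N : ℕ) (f : MvPolynomial (Fin n) ℝ) :
    Module.End ℝ (MvPolynomial (Fin n) ℝ) :=
  ∑ k ∈ Finset.range N,
    (k.factorial : ℝ)⁻¹ •
      ∑ I : Fin k → Fin n,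
        (LinearMap.mulLeft ℝ (pderivComp I f)) * DComp θ I

private lemma flatLift_eq_aux (θ : Fin n → Fin n → ℝ) (f : MvPolynomial (Fin n) ℝ) :
    flatLift θ f = flatLiftAux θ (f.totalDegree + 1) f := rfl

private lemma flatLiftAux_eq (θ : Fin n → Fin n → ℝ) {N : ℕ} {f : MvPolynomial (Fin n) ℝ}
    (hN : f.totalDegree < N) : flatLiftAux θ N f = flatLift θ f := by
  rw [flatLift_eq_aux, flatLiftAux, flatLiftAux]
  refine (Finset.sum_subset (Finset.range_subset_range.mpr (by omega)) ?_).symm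
  intro k hk hk'
  simp only [Finset.mem_range, not_lt] at hk'
  have : ∀ I : Fin k → Fin n,
      (LinearMap.mulLeft ℝ (pderivComp I f)) * DComp θ I = 0 := fun I => by
    rw [pderivComp_eq_zero I f (by omega)]
    simp
  rw [Finset.sum_congr rfl fun I _ => this I]
  simp

/-- moyal truncated at an arbitrary level `N`. -/
private def moyalAux (θ : Fin n → Fin n → ℝ) (N : ℕ) (f h : MvPolynomial (Fin n) ℝ) :
    MvPolynomial (Fin n) ℝ :=
  ∑ k ∈ Finset.range N, moyalTerm θ k f h

private lemma moyal_eq_aux (θ : Fin n → Fin n → ℝ) (f h : MvPolynomial (Fin n) ℝ) :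
    moyal θ f h = moyalAux θ (f.totalDegree + 1) f h := rfl

private lemma moyalAux_eq (θ : Fin n → Fin n → ℝ) {N : ℕ} {f : MvPolynomial (Fin n) ℝ}
    (h : MvPolynomial (Fin n) ℝ) (hN : f.totalDegree < N) :
    moyalAux θ N f h = moyal θ f h := by
  rw [moyal_eq_aux, moyalAux, moyalAux]
  refine (Finset.sum_subset (Finset.range_subset_range.mpr (by omega)) ?_).symm
  intro k hk hk'
  simp only [Finset.mem_range, not_lt] at hk'
  rw [moyalTerm]
  have : ∀ I : Fin k → Fin n, ∀ J : Fin k → Fin n,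
      (∏ i, θ (I i) (J i)) • ((pderivComp I f) * (pderivComp J h)) = 0 := fun I J => by
    rw [pderivComp_eq_zero I f (by omega)]
    simp
  rw [Finset.sum_congr rfl fun I _ => Finset.sum_congr rfl fun J _ => this I J]
  simp

private lemma pd_apply (i : Fin n) (p : MvPolynomial (Fin n) ℝ) : pd i p = pderiv i p := rfl

private lemma pderiv_X_mul' (i0 j : Fin n) (q : MvPolynomial (Fin n) ℝ) :
    pderiv i0 (X j * q) = X j * pderiv i0 q + (if i0 = j then q else 0) := by
  rw [pderiv_mul]
  by_cases h : i0 = j <;> simp [h, eq_comm, add_comm]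

private lemma cons_comp_succAbove {k : ℕ} (i0 : Fin n) (I' : Fin (k+1) → Fin n)
    (b : Fin (k+1)) :
    (fun c : Fin (k+1) => Fin.cons (α := fun _ => Fin n) i0 I' (b.succ.succAbove c))
      = Fin.cons (α := fun _ => Fin n) i0 (fun c : Fin k => I' (b.succAbove c)) := by
  funext c
  rcases Fin.eq_zero_or_eq_succ c with rfl | ⟨c', rfl⟩
  · simp
  · simp [Fin.succ_succAbove_succ]

private lemma pderivComp_X_mul {k : ℕ} :
    ∀ (I : Fin (k+1) → Fin n) (j : Fin n) (g : MvPolynomial (Fin n) ℝ),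
    pderivComp I (X j * g) = X j * pderivComp I g
      + ∑ a : Fin (k+1), if I a = j
          then pderivComp (fun c : Fin k => I (a.succAbove c)) g else 0 := by
  induction k with
  | zero =>
      intro I j g
      have h1 : I = Fin.cons (I 0) (Fin.tail I) := (Fin.cons_self_tail I).symm
      rw [h1]
      simp only [pderivComp_cons, pderivComp_nil, mul_one, Fin.sum_univ_succ,
        Fin.sum_univ_zero, add_zero, Fin.cons_zero, Module.End.one_apply, pd_apply]
      exact pderiv_X_mul' _ _ _
  | succ k ih =>
      intro I j g
      have h1 : I = Fin.cons (I 0) (Fin.tail I) := (Fin.cons_self_tail I).symm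
      rw [h1]
      set i0 := I 0
      set I' := Fin.tail I with hI'
      rw [pderivComp_cons, Module.End.mul_apply, pd_apply, ih I' j g, map_add, map_sum]
      rw [pderiv_X_mul']
      simp only [Fin.sum_univ_succ, Fin.cons_zero, Fin.cons_succ, Fin.succAbove_zero,
        cons_comp_succAbove, pderivComp_cons, Module.End.mul_apply, pd_apply,
        apply_ite (pderiv i0), map_zero]
      abel


private lemma Dop_apply (θ : Fin n → Fin n → ℝ) (j : Fin n) (p : MvPolynomial (Fin n) ℝ) :
    Dop θ j p = ∑ m : Fin n, θ j m • pderiv m p := by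
  rw [Dop, LinearMap.sum_apply]
  rfl

private lemma Dop_leibniz (θ : Fin n → Fin n → ℝ) (j : Fin n)
    (p q : MvPolynomial (Fin n) ℝ) :
    Dop θ j (p * q) = Dop θ j p * q + p * Dop θ j q := by
  simp only [Dop_apply, pderiv_mul, smul_add, Finset.sum_add_distrib,
    Finset.sum_mul, Finset.mul_sum, smul_mul_assoc, mul_smul_comm]

private lemma Dop_mulLeft (θ : Fin n → Fin n → ℝ) (j : Fin n) (p : MvPolynomial (Fin n) ℝ) :
    Dop θ j * LinearMap.mulLeft ℝ p
      = LinearMap.mulLeft ℝ p * Dop θ j + LinearMap.mulLeft ℝ (Dop θ j p) := by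
  refine LinearMap.ext fun q => ?_
  simp only [Module.End.mul_apply, LinearMap.add_apply, LinearMap.mulLeft_apply,
    Dop_leibniz]
  ring

private lemma pderivComp_Dop_apply (θ : Fin n → Fin n → ℝ) (j : Fin n) {k : ℕ}
    (I : Fin k → Fin n) (h : MvPolynomial (Fin n) ℝ) :
    pderivComp I (Dop θ j h) = Dop θ j (pderivComp I h) := by
  have := (Dop_comm_pderivComp θ j I).eq
  calc pderivComp I (Dop θ j h) = (pderivComp I * Dop θ j) h := rfl
    _ = (Dop θ j * pderivComp I) h := by rw [this]
    _ = Dop θ j (pderivComp I h) := rfl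

private lemma totalDegree_Dop_le (θ : Fin n → Fin n → ℝ) (j : Fin n)
    (h : MvPolynomial (Fin n) ℝ) : (Dop θ j h).totalDegree ≤ h.totalDegree := by
  rw [Dop_apply]
  refine (totalDegree_finset_sum _ _).trans (Finset.sup_le fun m _ => ?_)
  exact (totalDegree_smul_le _ _).trans (totalDegree_pderiv_le m h h.totalDegree (Nat.le_succ _))

private lemma Dop_mul_flatLiftAux (θ : Fin n → Fin n → ℝ) (N : ℕ) (j : Fin n)
    (h : MvPolynomial (Fin n) ℝ) :
    Dop θ j * flatLiftAux θ N h
      = flatLiftAux θ N h * Dop θ j + flatLiftAux θ N (Dop θ j h) := by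
  unfold flatLiftAux
  rw [Finset.mul_sum, Finset.sum_mul, ← Finset.sum_add_distrib]
  refine Finset.sum_congr rfl fun k _ => ?_
  rw [mul_smul_comm, smul_mul_assoc, ← smul_add]
  congr 1
  rw [Finset.mul_sum, Finset.sum_mul, ← Finset.sum_add_distrib]
  refine Finset.sum_congr rfl fun I _ => ?_
  calc Dop θ j * (LinearMap.mulLeft ℝ (pderivComp I h) * DComp θ I)
      = (Dop θ j * LinearMap.mulLeft ℝ (pderivComp I h)) * DComp θ I := by
        rw [mul_assoc]
    _ = (LinearMap.mulLeft ℝ (pderivComp I h) * Dop θ j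
          + LinearMap.mulLeft ℝ (Dop θ j (pderivComp I h))) * DComp θ I := by
        rw [Dop_mulLeft]
    _ = LinearMap.mulLeft ℝ (pderivComp I h) * (Dop θ j * DComp θ I)
          + LinearMap.mulLeft ℝ (Dop θ j (pderivComp I h)) * DComp θ I := by
        rw [add_mul, mul_assoc]
    _ = LinearMap.mulLeft ℝ (pderivComp I h) * DComp θ I * Dop θ j
          + LinearMap.mulLeft ℝ (pderivComp I (Dop θ j h)) * DComp θ I := by
        rw [(Dop_comm_DComp θ j I).eq, pderivComp_Dop_apply, mul_assoc]

private lemma Dop_mul_flatLift (θ : Fin n → Fin n → ℝ) (j : Fin n)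
    (h : MvPolynomial (Fin n) ℝ) :
    Dop θ j * flatLift θ h = flatLift θ h * Dop θ j + flatLift θ (Dop θ j h) := by
  rw [flatLift_eq_aux θ h, Dop_mul_flatLiftAux,
    flatLiftAux_eq θ (lt_of_le_of_lt (totalDegree_Dop_le θ j h) (Nat.lt_succ_self _))]


private lemma fact_coeff {M : Type*} [AddCommMonoid M] [Module ℝ M] (k : ℕ) (x : M) :
    ((k+1).factorial : ℝ)⁻¹ • ((k+1) • x) = (k.factorial : ℝ)⁻¹ • x := by
  rw [← Nat.cast_smul_eq_nsmul ℝ (k+1) x, smul_smul]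
  congr 1
  rw [Nat.factorial_succ]
  have h1 : ((k+1 : ℕ) : ℝ) ≠ 0 := Nat.cast_ne_zero.mpr (Nat.succ_ne_zero k)
  have h2 : ((k.factorial : ℕ) : ℝ) ≠ 0 := Nat.cast_ne_zero.mpr k.factorial_ne_zero
  push_cast
  field_simp

private lemma ML_sum_step (θ : Fin n → Fin n → ℝ) (k : ℕ) (j : Fin n)
    (g : MvPolynomial (Fin n) ℝ) :
    ∑ I : Fin (k+1) → Fin n, LinearMap.mulLeft ℝ (pderivComp I (X j * g)) * DComp θ I
      = LinearMap.mulLeft ℝ (X j)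
          * (∑ I : Fin (k+1) → Fin n, LinearMap.mulLeft ℝ (pderivComp I g) * DComp θ I)
        + (k+1) • ((∑ I' : Fin k → Fin n,
            LinearMap.mulLeft ℝ (pderivComp I' g) * DComp θ I') * Dop θ j) := by
  have expand : ∀ I : Fin (k+1) → Fin n,
      LinearMap.mulLeft ℝ (pderivComp I (X j * g)) * DComp θ I
        = LinearMap.mulLeft ℝ (X j) * (LinearMap.mulLeft ℝ (pderivComp I g) * DComp θ I)
          + ∑ a : Fin (k+1), (if I a = j then
              LinearMap.mulLeft ℝ (pderivComp (fun c : Fin k => I (a.succAbove c)) g)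
                * DComp θ I else 0) := by
    intro I
    rw [pderivComp_X_mul I j g]
    have : LinearMap.mulLeft ℝ
        (X j * pderivComp I g + ∑ a : Fin (k+1), if I a = j
          then pderivComp (fun c : Fin k => I (a.succAbove c)) g else 0)
        = LinearMap.mulLeft ℝ (X j) * LinearMap.mulLeft ℝ (pderivComp I g)
          + ∑ a : Fin (k+1), (if I a = j then
              LinearMap.mulLeft ℝ (pderivComp (fun c : Fin k => I (a.succAbove c)) g)
              else 0) := by
      refine LinearMap.ext fun q => ?_
      simp only [LinearMap.mulLeft_apply, LinearMap.add_apply, Module.End.mul_apply,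
        LinearMap.sum_apply, add_mul, Finset.sum_mul, mul_assoc]
      congr 1
      refine Finset.sum_congr rfl fun a _ => ?_
      split_ifs <;> simp
    rw [this, add_mul, Finset.sum_mul, mul_assoc]
    congr 1
    refine Finset.sum_congr rfl fun a _ => ?_
    split_ifs <;> simp
  rw [Finset.sum_congr rfl fun I _ => expand I, Finset.sum_add_distrib, ← Finset.mul_sum]
  congr 1
  rw [Finset.sum_comm]
  have inner : ∀ a : Fin (k+1),
      (∑ I : Fin (k+1) → Fin n, if I a = j then
          LinearMap.mulLeft ℝ (pderivComp (fun c : Fin k => I (a.succAbove c)) g)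
            * DComp θ I else 0)
        = (∑ I' : Fin k → Fin n,
            LinearMap.mulLeft ℝ (pderivComp I' g) * DComp θ I') * Dop θ j := by
    intro a
    have rw1 : ∀ I : Fin (k+1) → Fin n,
        (if I a = j then
          LinearMap.mulLeft ℝ (pderivComp (fun c : Fin k => I (a.succAbove c)) g)
            * DComp θ I else 0)
          = (fun (i0 : Fin n) (I' : Fin k → Fin n) => if i0 = j then
              LinearMap.mulLeft ℝ (pderivComp I' g) * (Dop θ i0 * DComp θ I') else 0)
              (I a) (fun c => I (a.succAbove c)) := by
      intro I
      simp only
      rw [DComp_extract θ I a]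
    rw [Finset.sum_congr rfl fun I _ => rw1 I]
    rw [sum_insertNth a (fun (i0 : Fin n) (I' : Fin k → Fin n) => if i0 = j then
      LinearMap.mulLeft ℝ (pderivComp I' g) * (Dop θ i0 * DComp θ I') else 0)]
    have rw2 : ∀ i0 : Fin n,
        (∑ I' : Fin k → Fin n, if i0 = j then
            LinearMap.mulLeft ℝ (pderivComp I' g) * (Dop θ i0 * DComp θ I') else 0)
          = if i0 = j then (∑ I' : Fin k → Fin n,
              LinearMap.mulLeft ℝ (pderivComp I' g) * DComp θ I') * Dop θ j else 0 := by
      intro i0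
      split_ifs with hh
      · subst hh
        rw [Finset.sum_mul]
        refine Finset.sum_congr rfl fun I' _ => ?_
        rw [(Dop_comm_DComp θ i0 I').eq, mul_assoc]
      · simp
    rw [Finset.sum_congr rfl fun i0 _ => rw2 i0, Finset.sum_ite_eq' Finset.univ j]
    simp
  rw [Finset.sum_congr rfl fun a _ => inner a, Finset.sum_const, Finset.card_univ,
    Fintype.card_fin]

private lemma flatLiftAux_X_mul (θ : Fin n → Fin n → ℝ) (N : ℕ) (j : Fin n)
    (g : MvPolynomial (Fin n) ℝ) :
    flatLiftAux θ (N+1) (X j * g)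
      = LinearMap.mulLeft ℝ (X j) * flatLiftAux θ (N+1) g
        + flatLiftAux θ N g * Dop θ j := by
  unfold flatLiftAux
  rw [Finset.sum_range_succ' (fun k => (k.factorial : ℝ)⁻¹ •
    ∑ I : Fin k → Fin n, LinearMap.mulLeft ℝ (pderivComp I (X j * g)) * DComp θ I) N]
  rw [Finset.sum_range_succ' (fun k => (k.factorial : ℝ)⁻¹ •
    ∑ I : Fin k → Fin n, LinearMap.mulLeft ℝ (pderivComp I g) * DComp θ I) N]
  have base : ((Nat.factorial 0 : ℝ)⁻¹ •
      ∑ I : Fin 0 → Fin n, LinearMap.mulLeft ℝ (pderivComp I (X j * g)) * DComp θ I)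
      = LinearMap.mulLeft ℝ (X j) * ((Nat.factorial 0 : ℝ)⁻¹ •
          ∑ I : Fin 0 → Fin n, LinearMap.mulLeft ℝ (pderivComp I g) * DComp θ I) := by
    rw [mul_smul_comm]
    congr 1
    have huniq : ∀ (F : (Fin 0 → Fin n) → Module.End ℝ (MvPolynomial (Fin n) ℝ)),
        ∑ I : Fin 0 → Fin n, F I = F Fin.elim0 := fun F =>
      Fintype.sum_eq_single Fin.elim0 (fun I hI =>
        absurd (funext fun c => c.elim0) hI)
    rw [huniq, huniq, pderivComp_nil, DComp_nil]
    refine LinearMap.ext fun q => ?_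
    simp [mul_assoc]
  have step : ∀ k : ℕ, (((k+1).factorial : ℝ)⁻¹ •
      ∑ I : Fin (k+1) → Fin n, LinearMap.mulLeft ℝ (pderivComp I (X j * g)) * DComp θ I)
      = LinearMap.mulLeft ℝ (X j) * (((k+1).factorial : ℝ)⁻¹ •
          ∑ I : Fin (k+1) → Fin n, LinearMap.mulLeft ℝ (pderivComp I g) * DComp θ I)
        + ((k.factorial : ℝ)⁻¹ •
            ∑ I' : Fin k → Fin n, LinearMap.mulLeft ℝ (pderivComp I' g) * DComp θ I')
          * Dop θ j := by
    intro k
    rw [ML_sum_step θ k j g, smul_add, fact_coeff, mul_smul_comm, smul_mul_assoc]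
  rw [Finset.sum_congr rfl fun k _ => step k, base]
  rw [Finset.sum_add_distrib, mul_add, Finset.mul_sum, Finset.sum_mul]
  abel

private lemma flatLift_X_mul (θ : Fin n → Fin n → ℝ) (j : Fin n)
    (g : MvPolynomial (Fin n) ℝ) :
    flatLift θ (X j * g)
      = LinearMap.mulLeft ℝ (X j) * flatLift θ g + flatLift θ g * Dop θ j := by
  have hdeg : (X j * g).totalDegree < (g.totalDegree + 1) + 1 := by
    refine lt_of_le_of_lt (totalDegree_mul _ _) ?_
    rw [totalDegree_X]
    omega
  rw [← flatLiftAux_eq θ hdeg, flatLiftAux_X_mul,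
    flatLiftAux_eq θ (by omega : g.totalDegree < g.totalDegree + 1 + 1),
    flatLiftAux_eq θ (Nat.lt_succ_self _)]


private lemma moyalTerm_zero (θ : Fin n → Fin n → ℝ) (f h : MvPolynomial (Fin n) ℝ) :
    moyalTerm θ 0 f h = f * h := by
  rw [moyalTerm]
  have huniq : ∀ (F : (Fin 0 → Fin n) → MvPolynomial (Fin n) ℝ),
      ∑ I : Fin 0 → Fin n, F I = F Fin.elim0 := fun F =>
    Fintype.sum_eq_single Fin.elim0 (fun I hI => absurd (funext fun c => c.elim0) hI)
  rw [huniq]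
  rw [huniq (fun J => (∏ i : Fin 0, θ (Fin.elim0 i) (J i)) •
    ((pderivComp Fin.elim0) f * (pderivComp J) h))]
  simp [pderivComp_nil]

private lemma moyalTerm_X_mul (θ : Fin n → Fin n → ℝ) (k : ℕ) (j : Fin n)
    (g h : MvPolynomial (Fin n) ℝ) :
    moyalTerm θ (k+1) (X j * g) h
      = X j * moyalTerm θ (k+1) g h + moyalTerm θ k g (Dop θ j h) := by
  rw [moyalTerm, moyalTerm, moyalTerm]
  -- expand the Leibniz rule in the `I`-summand
  have expand : ∀ (I : Fin (k+1) → Fin n) (J : Fin (k+1) → Fin n),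
      (∏ i, θ (I i) (J i)) • ((pderivComp I (X j * g)) * (pderivComp J h))
        = (∏ i, θ (I i) (J i)) • (X j * ((pderivComp I g) * (pderivComp J h)))
          + ∑ a : Fin (k+1), (∏ i, θ (I i) (J i)) •
              ((if I a = j then pderivComp (fun c : Fin k => I (a.succAbove c)) g else 0)
                * pderivComp J h) := by
    intro I J
    rw [pderivComp_X_mul I j g, add_mul, Finset.sum_mul, smul_add, Finset.smul_sum,
      mul_assoc]
  rw [Finset.sum_congr rfl fun I _ => Finset.sum_congr rfl fun J _ => expand I J]
  rw [Finset.sum_congr rfl fun I _ => Finset.sum_add_distrib, Finset.sum_add_distrib]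
  have first : (∑ I : Fin (k+1) → Fin n, ∑ J : Fin (k+1) → Fin n,
      (∏ i, θ (I i) (J i)) • (X j * ((pderivComp I g) * (pderivComp J h))))
      = X j * ∑ I : Fin (k+1) → Fin n, ∑ J : Fin (k+1) → Fin n,
          (∏ i, θ (I i) (J i)) • ((pderivComp I g) * (pderivComp J h)) := by
    rw [Finset.mul_sum]
    refine Finset.sum_congr rfl fun I _ => ?_
    rw [Finset.mul_sum]
    exact Finset.sum_congr rfl fun J _ => (mul_smul_comm _ _ _).symm
  -- the correction term, for each fixed `a`
  have hmsum : ∀ (I' J' : Fin k → Fin n),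
      ∑ m : Fin n, (θ j m * ∏ c, θ (I' c) (J' c)) •
          ((pderivComp I' g) * pderiv m ((pderivComp J') h))
        = (∏ c, θ (I' c) (J' c)) • ((pderivComp I' g) * (pderivComp J' (Dop θ j h))) := by
    intro I' J'
    rw [pderivComp_Dop_apply, Dop_apply, Finset.mul_sum, Finset.smul_sum]
    refine Finset.sum_congr rfl fun m _ => ?_
    rw [mul_smul_comm, smul_smul, mul_comm]
  have corr : ∀ a : Fin (k+1),
      (∑ I : Fin (k+1) → Fin n, ∑ J : Fin (k+1) → Fin n,
        (∏ i, θ (I i) (J i)) •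
          ((if I a = j then pderivComp (fun c : Fin k => I (a.succAbove c)) g else 0)
            * pderivComp J h))
        = ∑ I' : Fin k → Fin n, ∑ J' : Fin k → Fin n,
            (∏ c, θ (I' c) (J' c)) •
              ((pderivComp I' g) * (pderivComp J' (Dop θ j h))) := by
    intro a
    set Q : Fin n → (Fin k → Fin n) → Fin n → (Fin k → Fin n) → MvPolynomial (Fin n) ℝ :=
      fun i0 I' m J' => (θ i0 m * ∏ c, θ (I' c) (J' c)) •
        ((if i0 = j then pderivComp I' g else 0) * pderiv m ((pderivComp J') h)) with hQ
    have hsummand : ∀ (I J : Fin (k+1) → Fin n),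
        (∏ i, θ (I i) (J i)) •
          ((if I a = j then pderivComp (fun c : Fin k => I (a.succAbove c)) g else 0)
            * pderivComp J h)
          = Q (I a) (fun c => I (a.succAbove c)) (J a) (fun c => J (a.succAbove c)) := by
      intro I J
      rw [hQ]
      simp only
      rw [Fin.prod_univ_succAbove (fun i => θ (I i) (J i)) a,
        pderivComp_extract J a, Module.End.mul_apply, pd_apply]
    rw [Finset.sum_congr rfl fun I _ => Finset.sum_congr rfl fun J _ => hsummand I J]
    rw [Finset.sum_congr rfl fun I _ =>
      sum_insertNth a (Q (I a) (fun c => I (a.succAbove c)))]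
    rw [sum_insertNth a (fun i0 I' => ∑ m : Fin n, ∑ J' : Fin k → Fin n, Q i0 I' m J')]
    have hcollapse : ∀ i0 : Fin n,
        (∑ I' : Fin k → Fin n, ∑ m : Fin n, ∑ J' : Fin k → Fin n, Q i0 I' m J')
          = if i0 = j then ∑ I' : Fin k → Fin n, ∑ m : Fin n,
              ∑ J' : Fin k → Fin n, Q j I' m J' else 0 := by
      intro i0
      split_ifs with hh
      · subst hh; rfl
      · refine Finset.sum_eq_zero fun I' _ => Finset.sum_eq_zero fun m _ =>
          Finset.sum_eq_zero fun J' _ => ?_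
        rw [hQ]
        simp only [if_neg hh, zero_mul, smul_zero]
    rw [Finset.sum_congr rfl fun I' _ => hcollapse I', Finset.sum_ite_eq' Finset.univ j,
      if_pos (Finset.mem_univ j)]
    refine Finset.sum_congr rfl fun I' _ => ?_
    rw [Finset.sum_comm]
    refine Finset.sum_congr rfl fun J' _ => ?_
    have : ∀ m, Q j I' m J' = (θ j m * ∏ c, θ (I' c) (J' c)) •
        ((pderivComp I' g) * pderiv m ((pderivComp J') h)) := fun m => by
      rw [hQ]; simp
    rw [Finset.sum_congr rfl fun m _ => this m, hmsum I' J']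
  have second : (∑ I : Fin (k+1) → Fin n, ∑ J : Fin (k+1) → Fin n,
      ∑ a : Fin (k+1), (∏ i, θ (I i) (J i)) •
        ((if I a = j then pderivComp (fun c : Fin k => I (a.succAbove c)) g else 0)
          * pderivComp J h))
      = (k+1) • ∑ I' : Fin k → Fin n, ∑ J' : Fin k → Fin n,
          (∏ c, θ (I' c) (J' c)) •
            ((pderivComp I' g) * (pderivComp J' (Dop θ j h))) := by
    rw [Finset.sum_congr rfl fun I _ => Finset.sum_comm, Finset.sum_comm]
    rw [Finset.sum_congr rfl fun a _ => corr a, Finset.sum_const, Finset.card_univ,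
      Fintype.card_fin]
  rw [smul_add, first, second, fact_coeff, mul_smul_comm]



private lemma moyalAux_X_mul (θ : Fin n → Fin n → ℝ) (N : ℕ) (j : Fin n)
    (g h : MvPolynomial (Fin n) ℝ) :
    moyalAux θ (N+1) (X j * g) h
      = X j * moyalAux θ (N+1) g h + moyalAux θ N g (Dop θ j h) := by
  unfold moyalAux
  rw [Finset.sum_range_succ' (fun k => moyalTerm θ k (X j * g) h) N,
    Finset.sum_range_succ' (fun k => moyalTerm θ k g h) N]
  rw [Finset.sum_congr rfl fun k _ => moyalTerm_X_mul θ k j g h, moyalTerm_zero,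
    moyalTerm_zero, Finset.sum_add_distrib, mul_add, Finset.mul_sum, mul_assoc]
  abel

private lemma moyal_X_mul (θ : Fin n → Fin n → ℝ) (j : Fin n)
    (g h : MvPolynomial (Fin n) ℝ) :
    moyal θ (X j * g) h = X j * moyal θ g h + moyal θ g (Dop θ j h) := by
  have hdeg : (X j * g).totalDegree < (g.totalDegree + 1) + 1 := by
    refine lt_of_le_of_lt (totalDegree_mul _ _) ?_
    rw [totalDegree_X]
    omega
  rw [← moyalAux_eq θ h hdeg, moyalAux_X_mul,
    moyalAux_eq θ h (by omega : g.totalDegree < g.totalDegree + 1 + 1),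
    moyalAux_eq θ (Dop θ j h) (Nat.lt_succ_self _)]

private lemma ML_add (p q : MvPolynomial (Fin n) ℝ) :
    LinearMap.mulLeft ℝ (p + q) = LinearMap.mulLeft ℝ p + LinearMap.mulLeft ℝ q :=
  LinearMap.ext fun r => add_mul p q r

private lemma ML_smul (c : ℝ) (p : MvPolynomial (Fin n) ℝ) :
    LinearMap.mulLeft ℝ (c • p) = c • LinearMap.mulLeft ℝ p :=
  LinearMap.ext fun r => smul_mul_assoc c p r

private lemma flatLiftAux_add (θ : Fin n → Fin n → ℝ) (N : ℕ)
    (f g : MvPolynomial (Fin n) ℝ) :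
    flatLiftAux θ N (f + g) = flatLiftAux θ N f + flatLiftAux θ N g := by
  unfold flatLiftAux
  rw [← Finset.sum_add_distrib]
  refine Finset.sum_congr rfl fun k _ => ?_
  rw [← smul_add, ← Finset.sum_add_distrib]
  congr 1
  refine Finset.sum_congr rfl fun I _ => ?_
  rw [map_add, ML_add, add_mul]

private lemma flatLiftAux_smul (θ : Fin n → Fin n → ℝ) (N : ℕ) (c : ℝ)
    (f : MvPolynomial (Fin n) ℝ) :
    flatLiftAux θ N (c • f) = c • flatLiftAux θ N f := by
  unfold flatLiftAux
  rw [Finset.smul_sum]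
  refine Finset.sum_congr rfl fun k _ => ?_
  have hterm : ∀ I : Fin k → Fin n,
      LinearMap.mulLeft ℝ (pderivComp I (c • f)) * DComp θ I
        = c • (LinearMap.mulLeft ℝ (pderivComp I f) * DComp θ I) := fun I => by
    rw [map_smul, ML_smul, smul_mul_assoc]
  rw [Finset.sum_congr rfl fun I _ => hterm I, ← Finset.smul_sum, smul_comm c]

private lemma flatLift_add (θ : Fin n → Fin n → ℝ) (f g : MvPolynomial (Fin n) ℝ) :
    flatLift θ (f + g) = flatLift θ f + flatLift θ g := by
  set N := max f.totalDegree g.totalDegree + 1 with hN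
  rw [← flatLiftAux_eq θ (show (f+g).totalDegree < N from
      lt_of_le_of_lt (totalDegree_add f g) (by omega)),
    ← flatLiftAux_eq θ (show f.totalDegree < N by omega),
    ← flatLiftAux_eq θ (show g.totalDegree < N by omega),
    flatLiftAux_add]

private lemma flatLift_smul (θ : Fin n → Fin n → ℝ) (c : ℝ)
    (f : MvPolynomial (Fin n) ℝ) :
    flatLift θ (c • f) = c • flatLift θ f := by
  rw [← flatLiftAux_eq θ (show (c • f).totalDegree < f.totalDegree + 1 from
      lt_of_le_of_lt (totalDegree_smul_le c f) (Nat.lt_succ_self _)),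
    flatLiftAux_smul, flatLiftAux_eq θ (Nat.lt_succ_self _)]

private lemma moyalAux_add_left (θ : Fin n → Fin n → ℝ) (N : ℕ)
    (f g h : MvPolynomial (Fin n) ℝ) :
    moyalAux θ N (f + g) h = moyalAux θ N f h + moyalAux θ N g h := by
  unfold moyalAux
  rw [← Finset.sum_add_distrib]
  refine Finset.sum_congr rfl fun k _ => ?_
  rw [moyalTerm, moyalTerm, moyalTerm, ← smul_add, ← Finset.sum_add_distrib]
  congr 1
  refine Finset.sum_congr rfl fun I _ => ?_
  rw [← Finset.sum_add_distrib]
  refine Finset.sum_congr rfl fun J _ => ?_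
  rw [map_add, add_mul, smul_add]

private lemma moyal_add_left (θ : Fin n → Fin n → ℝ) (f g h : MvPolynomial (Fin n) ℝ) :
    moyal θ (f + g) h = moyal θ f h + moyal θ g h := by
  set N := max f.totalDegree g.totalDegree + 1 with hN
  rw [← moyalAux_eq θ h (show (f+g).totalDegree < N from
      lt_of_le_of_lt (totalDegree_add f g) (by omega)),
    ← moyalAux_eq θ h (show f.totalDegree < N by omega),
    ← moyalAux_eq θ h (show g.totalDegree < N by omega),
    moyalAux_add_left]

private lemma flatLift_C (θ : Fin n → Fin n → ℝ) (a : ℝ) :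
    flatLift θ (C a : MvPolynomial (Fin n) ℝ) = LinearMap.mulLeft ℝ (C a) := by
  rw [flatLift_eq_aux, totalDegree_C]
  unfold flatLiftAux
  rw [Finset.sum_range_one]
  have huniq : ∀ (F : (Fin 0 → Fin n) → Module.End ℝ (MvPolynomial (Fin n) ℝ)),
      ∑ I : Fin 0 → Fin n, F I = F Fin.elim0 := fun F =>
    Fintype.sum_eq_single Fin.elim0 (fun I hI => absurd (funext fun c => c.elim0) hI)
  rw [huniq, pderivComp_nil, DComp_nil, mul_one]
  simp

private lemma moyal_C (θ : Fin n → Fin n → ℝ) (a : ℝ) (h : MvPolynomial (Fin n) ℝ) :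
    moyal θ (C a : MvPolynomial (Fin n) ℝ) h = C a * h := by
  rw [moyal_eq_aux, totalDegree_C]
  unfold moyalAux
  rw [Finset.sum_range_one, moyalTerm_zero]

private lemma Dop_one (θ : Fin n → Fin n → ℝ) (j : Fin n) :
    Dop θ j (1 : MvPolynomial (Fin n) ℝ) = 0 := by
  rw [Dop_apply]
  simp

private lemma DComp_one (θ : Fin n → Fin n → ℝ) :
    ∀ {k : ℕ} (I : Fin (k+1) → Fin n), DComp θ I (1 : MvPolynomial (Fin n) ℝ) = 0 := by
  intro k
  induction k with
  | zero =>
      intro I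
      rw [← Fin.cons_self_tail I, DComp_cons, Module.End.mul_apply, DComp_nil,
        Module.End.one_apply, Dop_one]
  | succ k ih =>
      intro I
      rw [← Fin.cons_self_tail I, DComp_cons, Module.End.mul_apply, ih, map_zero]

private lemma flatLift_one (θ : Fin n → Fin n → ℝ) (g : MvPolynomial (Fin n) ℝ) :
    flatLift θ g (1 : MvPolynomial (Fin n) ℝ) = g := by
  rw [flatLift, LinearMap.sum_apply, Finset.sum_eq_single 0]
  · have huniq : ∀ (F : (Fin 0 → Fin n) → Module.End ℝ (MvPolynomial (Fin n) ℝ)),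
        ∑ I : Fin 0 → Fin n, F I = F Fin.elim0 := fun F =>
      Fintype.sum_eq_single Fin.elim0 (fun I hI => absurd (funext fun c => c.elim0) hI)
    rw [huniq, pderivComp_nil, DComp_nil, mul_one]
    simp
  · intro k _ hk
    obtain ⟨k', rfl⟩ := Nat.exists_eq_succ_of_ne_zero hk
    rw [LinearMap.smul_apply, LinearMap.sum_apply]
    rw [Finset.sum_eq_zero fun I _ => by
      rw [Module.End.mul_apply, DComp_one, map_zero]]
    simp
  · intro hh
    exact absurd (Finset.mem_range.mpr (by omega)) hh


private lemma ML_C_eq_smul (a : ℝ) :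
    LinearMap.mulLeft ℝ (C a : MvPolynomial (Fin n) ℝ)
      = a • (1 : Module.End ℝ (MvPolynomial (Fin n) ℝ)) :=
  LinearMap.ext fun q => by
    rw [LinearMap.mulLeft_apply, LinearMap.smul_apply, Module.End.one_apply,
      ← smul_eq_C_mul]

private lemma flatLift_mul_flatLift (θ : Fin n → Fin n → ℝ)
    (f h : MvPolynomial (Fin n) ℝ) :
    flatLift θ f * flatLift θ h = flatLift θ (moyal θ f h) := by
  induction f using MvPolynomial.induction_on generalizing h with
  | C a =>
      rw [flatLift_C, moyal_C, show (C a * h : MvPolynomial (Fin n) ℝ) = a • h from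
        (smul_eq_C_mul h a).symm ▸ rfl, flatLift_smul, ML_C_eq_smul, smul_mul_assoc,
        one_mul]
  | add p q hp hq =>
      rw [flatLift_add, add_mul, hp h, hq h, moyal_add_left, flatLift_add]
  | mul_X p j hp =>
      rw [mul_comm p (X j), flatLift_X_mul, add_mul, mul_assoc, mul_assoc, hp h,
        Dop_mul_flatLift, mul_add, ← mul_assoc, hp h, hp (Dop θ j h)]
      rw [moyal_X_mul, flatLift_add, flatLift_X_mul]
      abel

end FlatLiftAux

theorem flatLift_comp_eq_flatLift_moyal
    {n : ℕ} (θ : Fin n → Fin n → ℝ) (hanti : ∀ i j, θ i j = -θ j i)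
    (f h : MvPolynomial (Fin n) ℝ) :
    flatLift θ f * flatLift θ h = flatLift θ (moyal θ f h) ∧
    (flatLift θ f * flatLift θ h) 1 = moyal θ f h := by
  refine ⟨flatLift_mul_flatLift θ f h, ?_⟩
  rw [flatLift_mul_flatLift θ f h]
  exact flatLift_one θ (moyal θ f h)
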